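/- Let M = ⟨S, A, P, R, γ⟩ be a finite MDP with 1/2 < γ < 1, M̄ = ⟨S̄, A, P̄, R̄, γ⟩ a latent MDP over a finite metric space (S̄, d̄), φ : S → S̄ an encoder, π̄ a latent policy, π_b a baseline policy, C ∈ (1, 1/γ) with π̄∘φ ∈ N^C(π_b), and D = max{π̄(a|φ(s))/π_b(a|s) : s ∈ S, a ∈ supp π_b(·|s)}. Let ξ be a stationary distribution of π_b. Assume the latent model has Lipschitz constants K_R̄, K_P̄ under π̄ with K_P̄ < 1/γ, and set K_V = K_R̄/(1 − γ·K_P̄). Let ε > 0 and δ = 4·(L_R + γ·K_V·L_P)/(ε·(1/D − γ)), where L_R, L_P are the reward and transition losses with respect to ξ and π_b. Then for every coupling λ ∈ Δ(S × S) whose two marginals are both equal to ξ, λ({(s₁, s₂) : |V^{π̄∘φ}(s₁) − V^{π̄∘φ}(s₂)| > K_V·d̄(φ(s₁), φ(s₂)) + ε}) ≤ δ; i.e., with probability at least 1 − δ, |V^{π̄∘φ}(s₁) − V^{π̄∘φ}(s₂)| ≤ K_V·d̄(φ(s₁), φ(s₂)) + ε. -/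

import Mathlib

open Finset

variable {S A SL : Type*} [Fintype S] [Fintype A] [Fintype SL]

/-- A (stationary, stochastic) policy. -/
def IsPolicy {X : Type*} [Fintype X] (π : X → A → ℝ) : Prop :=
  ∀ x, (∀ a, 0 ≤ π x a) ∧ (∑ a, π x a) = 1

/-- The neighborhood `N^C(π)`. -/
def InNbhd (C : ℝ) (π π' : S → A → ℝ) : Prop :=
  IsPolicy π' ∧ (∀ s a, (0 < π s a ↔ 0 < π' s a)) ∧
    ∀ s a, 0 < π s a → (2 - C ≤ π' s a / π s a ∧ π' s a / π s a ≤ C)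

/-- The Wasserstein distance between two distributions on a finite metric
space (infimum of the expected distance over all couplings). -/
noncomputable def Wass [MetricSpace SL] (μ ν : SL → ℝ) : ℝ :=
  sInf { c : ℝ | ∃ lam : SL × SL → ℝ, (∀ p, 0 ≤ lam p) ∧
    (∀ x, (∑ y, lam (x, y)) = μ x) ∧ (∀ y, (∑ x, lam (x, y)) = ν y) ∧
    c = ∑ p : SL × SL, lam p * dist p.1 p.2 }

lemma wass_nonneg [MetricSpace SL] (μ ν : SL → ℝ) : 0 ≤ Wass μ ν := by
  apply Real.sInf_nonneg
  rintro c ⟨lam, h0, -, -, rfl⟩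
  exact Finset.sum_nonneg fun p _ => mul_nonneg (h0 p) dist_nonneg

lemma kantorovich [MetricSpace SL] [Nonempty SL] (L : ℝ) (hL : 0 ≤ L) (f : SL → ℝ)
    (hf : ∀ x y, |f x - f y| ≤ L * dist x y)
    (μ ν : SL → ℝ) (hμ0 : ∀ x, 0 ≤ μ x) (hμ1 : (∑ x, μ x) = 1)
    (hν0 : ∀ x, 0 ≤ ν x) (hν1 : (∑ x, ν x) = 1) :
    |(∑ x, μ x * f x) - ∑ x, ν x * f x| ≤ L * Wass μ ν := by
  set Sset := { c : ℝ | ∃ lam : SL × SL → ℝ, (∀ p, 0 ≤ lam p) ∧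
    (∀ x, (∑ y, lam (x, y)) = μ x) ∧ (∀ y, (∑ x, lam (x, y)) = ν y) ∧
    c = ∑ p : SL × SL, lam p * dist p.1 p.2 } with hSset
  have hne : Sset.Nonempty := by
    refine ⟨_, fun p => μ p.1 * ν p.2, fun p => mul_nonneg (hμ0 _) (hν0 _), ?_, ?_, rfl⟩
    · intro x; show (∑ y, μ x * ν y) = μ x; rw [← Finset.mul_sum, hν1, mul_one]
    · intro y; show (∑ x, μ x * ν y) = ν y; rw [← Finset.sum_mul, hμ1, one_mul]
  have key : ∀ c ∈ Sset, |(∑ x, μ x * f x) - ∑ x, ν x * f x| ≤ L * c := by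
    rintro c ⟨lam, h0, hm1, hm2, rfl⟩
    have e1 : (∑ x, μ x * f x) = ∑ p : SL × SL, lam p * f p.1 := by
      rw [Fintype.sum_prod_type]
      exact Finset.sum_congr rfl fun x _ => by rw [← hm1 x, Finset.sum_mul]
    have e2 : (∑ x, ν x * f x) = ∑ p : SL × SL, lam p * f p.2 := by
      rw [Fintype.sum_prod_type_right]
      exact Finset.sum_congr rfl fun y _ => by rw [← hm2 y, Finset.sum_mul]
    rw [e1, e2, ← Finset.sum_sub_distrib]
    calc |∑ p : SL × SL, (lam p * f p.1 - lam p * f p.2)|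
        ≤ ∑ p : SL × SL, |lam p * f p.1 - lam p * f p.2| := Finset.abs_sum_le_sum_abs _ _
      _ ≤ ∑ p : SL × SL, lam p * (L * dist p.1 p.2) := by
          refine Finset.sum_le_sum fun p _ => ?_
          rw [← mul_sub, abs_mul, abs_of_nonneg (h0 p)]
          exact mul_le_mul_of_nonneg_left (hf _ _) (h0 p)
      _ = L * ∑ p : SL × SL, lam p * dist p.1 p.2 := by
          rw [Finset.mul_sum]; exact Finset.sum_congr rfl fun p _ => by ring
  rcases eq_or_lt_of_le hL with hL0 | hL0
  · have hconst : ∀ x y, f x = f y := fun x y => by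
      have := hf x y; rw [← hL0, zero_mul] at this
      linarith [abs_nonneg (f x - f y), le_antisymm this (abs_nonneg _), abs_le.mp this]
    obtain ⟨x₀⟩ := ‹Nonempty SL›
    have e : ∀ (μ' : SL → ℝ), (∑ x, μ' x) = 1 → (∑ x, μ' x * f x) = f x₀ := by
      intro μ' h1
      calc (∑ x, μ' x * f x) = ∑ x, μ' x * f x₀ :=
            Finset.sum_congr rfl fun x _ => by rw [hconst x x₀]
        _ = f x₀ := by rw [← Finset.sum_mul, h1, one_mul]
    rw [e μ hμ1, e ν hν1, sub_self, abs_zero, ← hL0, zero_mul]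
  · rw [← div_le_iff₀' hL0]
    exact le_csInf hne fun c hc => (div_le_iff₀' hL0).mpr (key c hc)

lemma exists_latent_value [Nonempty A] (πbar : SL → A → ℝ) (Rbar : SL → A → ℝ)
    (Pbar : SL → A → SL → ℝ) (γ : ℝ) (hγ0 : 0 ≤ γ) (hγ1 : γ < 1)
    (hπbar : ∀ x, (∀ a, 0 ≤ πbar x a) ∧ (∑ a, πbar x a) = 1)
    (hPbar : ∀ x a, (∀ x', 0 ≤ Pbar x a x') ∧ (∑ x', Pbar x a x') = 1) :
    ∃ Vb : SL → ℝ, ∀ x, Vb x = ∑ a, πbar x a * (Rbar x a + γ * ∑ x', Pbar x a x' * Vb x') := by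
  set T : (SL → ℝ) → (SL → ℝ) :=
    fun f x => ∑ a, πbar x a * (Rbar x a + γ * ∑ x', Pbar x a x' * f x') with hT
  have hlip : LipschitzWith ⟨γ, hγ0⟩ T := by
    apply LipschitzWith.of_dist_le_mul
    intro f g
    rw [dist_pi_le_iff (by positivity)]
    intro x
    rw [Real.dist_eq]
    have : T f x - T g x = ∑ a, πbar x a * (γ * ∑ x', Pbar x a x' * (f x' - g x')) := by
      simp only [hT, ← Finset.sum_sub_distrib]
      refine Finset.sum_congr rfl fun a _ => ?_
      simp only [mul_sub, Finset.sum_sub_distrib]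
      ring
    rw [this]
    calc |∑ a, πbar x a * (γ * ∑ x', Pbar x a x' * (f x' - g x'))|
        ≤ ∑ a, |πbar x a * (γ * ∑ x', Pbar x a x' * (f x' - g x'))| :=
          Finset.abs_sum_le_sum_abs _ _
      _ ≤ ∑ a, πbar x a * (γ * dist f g) := by
          refine Finset.sum_le_sum fun a _ => ?_
          rw [abs_mul, abs_of_nonneg ((hπbar x).1 a), abs_mul, abs_of_nonneg hγ0]
          refine mul_le_mul_of_nonneg_left (mul_le_mul_of_nonneg_left ?_ hγ0) ((hπbar x).1 a)
          calc |∑ x', Pbar x a x' * (f x' - g x')|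
              ≤ ∑ x', |Pbar x a x' * (f x' - g x')| := Finset.abs_sum_le_sum_abs _ _
            _ ≤ ∑ x', Pbar x a x' * dist f g := by
                refine Finset.sum_le_sum fun x' _ => ?_
                rw [abs_mul, abs_of_nonneg ((hPbar x a).1 x')]
                refine mul_le_mul_of_nonneg_left ?_ ((hPbar x a).1 x')
                rw [← Real.dist_eq]
                exact dist_le_pi_dist f g x'
            _ = dist f g := by rw [← Finset.sum_mul, (hPbar x a).2, one_mul]
      _ = γ * dist f g := by rw [← Finset.sum_mul, (hπbar x).2, one_mul]
  have hcon : ContractingWith ⟨γ, hγ0⟩ T := ⟨by exact_mod_cast hγ1, hlip⟩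
  refine ⟨hcon.fixedPoint T, fun x => ?_⟩
  conv_lhs => rw [← hcon.fixedPoint_isFixedPt]


lemma latent_value_lipschitz [MetricSpace SL] [Nonempty SL] [Nonempty A]
    (πbar Rbar : SL → A → ℝ) (Pbar : SL → A → SL → ℝ) (γ KR KP : ℝ)
    (hγ0 : 0 ≤ γ) (hγKP : γ * KP < 1) (hKR0 : 0 ≤ KR) (hKP0 : 0 ≤ KP)
    (hπbar : ∀ x, (∀ a, 0 ≤ πbar x a) ∧ (∑ a, πbar x a) = 1)
    (hPbar : ∀ x a, (∀ x', 0 ≤ Pbar x a x') ∧ (∑ x', Pbar x a x') = 1)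
    (hLipR : ∀ x₁ x₂ : SL,
      |(∑ a, πbar x₁ a * Rbar x₁ a) - (∑ a, πbar x₂ a * Rbar x₂ a)| ≤ KR * dist x₁ x₂)
    (hLipP : ∀ x₁ x₂ : SL,
      Wass (fun x' => ∑ a, πbar x₁ a * Pbar x₁ a x')
        (fun x' => ∑ a, πbar x₂ a * Pbar x₂ a x') ≤ KP * dist x₁ x₂)
    (Vb : SL → ℝ)
    (hVb : ∀ x, Vb x = ∑ a, πbar x a * (Rbar x a + γ * ∑ x', Pbar x a x' * Vb x')) :
    ∀ x₁ x₂ : SL, |Vb x₁ - Vb x₂| ≤ (KR / (1 - γ * KP)) * dist x₁ x₂ := by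
  classical
  have hden : 0 < 1 - γ * KP := by linarith
  have hKV0 : 0 ≤ KR / (1 - γ * KP) := div_nonneg hKR0 hden.le
  have expand : ∀ x, Vb x =
      (∑ a, πbar x a * Rbar x a) + γ * ∑ x', (∑ a, πbar x a * Pbar x a x') * Vb x' := by
    intro x
    rw [hVb x]
    simp only [mul_add, Finset.sum_add_distrib]
    congr 1
    calc (∑ a, πbar x a * (γ * ∑ x', Pbar x a x' * Vb x'))
        = ∑ a, ∑ x', γ * (πbar x a * Pbar x a x' * Vb x') := by
          refine Finset.sum_congr rfl fun a _ => ?_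
          rw [Finset.mul_sum, Finset.mul_sum]
          exact Finset.sum_congr rfl fun x' _ => by ring
      _ = ∑ x', ∑ a, γ * (πbar x a * Pbar x a x' * Vb x') := Finset.sum_comm
      _ = γ * ∑ x', (∑ a, πbar x a * Pbar x a x') * Vb x' := by
          rw [Finset.mul_sum]
          refine Finset.sum_congr rfl fun x' _ => ?_
          rw [Finset.sum_mul, Finset.mul_sum]
  have hdist : ∀ x, (∀ x', 0 ≤ ∑ a, πbar x a * Pbar x a x') ∧
      (∑ x', ∑ a, πbar x a * Pbar x a x') = 1 := by
    intro x
    constructor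
    · intro x'; exact Finset.sum_nonneg fun a _ =>
        mul_nonneg ((hπbar x).1 a) ((hPbar x a).1 x')
    · rw [Finset.sum_comm]
      calc (∑ a, ∑ x', πbar x a * Pbar x a x')
          = ∑ a, πbar x a := Finset.sum_congr rfl fun a _ => by
            rw [← Finset.mul_sum, (hPbar x a).2, mul_one]
        _ = 1 := (hπbar x).2
  by_cases hF : ((univ : Finset (SL × SL)).filter (fun p => p.1 ≠ p.2)).Nonempty
  · set F := ((univ : Finset (SL × SL)).filter (fun p => p.1 ≠ p.2)) with hFdef
    set L := F.sup' hF (fun p => |Vb p.1 - Vb p.2| / dist p.1 p.2) with hLdef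
    have hmemd : ∀ p ∈ F, 0 < dist p.1 p.2 := by
      intro p hp
      rw [hFdef, Finset.mem_filter] at hp
      exact dist_pos.mpr hp.2
    have hL0 : 0 ≤ L := by
      obtain ⟨p, hp⟩ := hF
      exact le_trans (div_nonneg (abs_nonneg _) dist_nonneg)
        (Finset.le_sup' (fun p : SL × SL => |Vb p.1 - Vb p.2| / dist p.1 p.2) hp)
    have hLlip : ∀ x₁ x₂, |Vb x₁ - Vb x₂| ≤ L * dist x₁ x₂ := by
      intro x₁ x₂
      by_cases h : x₁ = x₂
      · simp [h]
      · have hp : (x₁, x₂) ∈ F := by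
          rw [hFdef, Finset.mem_filter]; exact ⟨Finset.mem_univ _, h⟩
        have hd : 0 < dist x₁ x₂ := hmemd _ hp
        have := Finset.le_sup' (fun p : SL × SL => |Vb p.1 - Vb p.2| / dist p.1 p.2) hp
        rw [← hLdef] at this
        calc |Vb x₁ - Vb x₂| = (|Vb x₁ - Vb x₂| / dist x₁ x₂) * dist x₁ x₂ := by
              field_simp
          _ ≤ L * dist x₁ x₂ := mul_le_mul_of_nonneg_right this hd.le
    have key : ∀ x₁ x₂, |Vb x₁ - Vb x₂| ≤ (KR + γ * KP * L) * dist x₁ x₂ := by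
      intro x₁ x₂
      have e : Vb x₁ - Vb x₂ =
          ((∑ a, πbar x₁ a * Rbar x₁ a) - ∑ a, πbar x₂ a * Rbar x₂ a)
          + γ * ((∑ x', (∑ a, πbar x₁ a * Pbar x₁ a x') * Vb x')
                 - ∑ x', (∑ a, πbar x₂ a * Pbar x₂ a x') * Vb x') := by
        rw [expand x₁, expand x₂]; ring
      have h2 : |(∑ x', (∑ a, πbar x₁ a * Pbar x₁ a x') * Vb x')
                 - ∑ x', (∑ a, πbar x₂ a * Pbar x₂ a x') * Vb x'| ≤ L * (KP * dist x₁ x₂) := by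
        refine le_trans (kantorovich L hL0 Vb hLlip _ _
          (hdist x₁).1 (hdist x₁).2 (hdist x₂).1 (hdist x₂).2) ?_
        exact mul_le_mul_of_nonneg_left (hLipP x₁ x₂) hL0
      calc |Vb x₁ - Vb x₂| ≤ |(∑ a, πbar x₁ a * Rbar x₁ a) - ∑ a, πbar x₂ a * Rbar x₂ a|
            + |γ * ((∑ x', (∑ a, πbar x₁ a * Pbar x₁ a x') * Vb x')
                 - ∑ x', (∑ a, πbar x₂ a * Pbar x₂ a x') * Vb x')| := by
            rw [e]; exact abs_add_le _ _
        _ ≤ KR * dist x₁ x₂ + γ * (L * (KP * dist x₁ x₂)) := by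
            rw [abs_mul, abs_of_nonneg hγ0]
            exact add_le_add (hLipR x₁ x₂) (mul_le_mul_of_nonneg_left h2 hγ0)
        _ = (KR + γ * KP * L) * dist x₁ x₂ := by ring
    have hLle : L ≤ KR / (1 - γ * KP) := by
      obtain ⟨p, hp, hpe⟩ := Finset.exists_mem_eq_sup' hF
        (fun p : SL × SL => |Vb p.1 - Vb p.2| / dist p.1 p.2)
      have hd : 0 < dist p.1 p.2 := hmemd _ hp
      have h1 : L * dist p.1 p.2 = |Vb p.1 - Vb p.2| := by
        rw [hLdef, hpe, div_mul_cancel₀]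
        exact hd.ne'
      have h2 : L * dist p.1 p.2 ≤ (KR + γ * KP * L) * dist p.1 p.2 := by
        rw [h1]; exact key p.1 p.2
      have h3 : L ≤ KR + γ * KP * L := le_of_mul_le_mul_right h2 hd
      rw [le_div_iff₀ hden]
      nlinarith
    intro x₁ x₂
    exact le_trans (hLlip x₁ x₂)
      (mul_le_mul_of_nonneg_right hLle dist_nonneg)
  · intro x₁ x₂
    have hx : x₁ = x₂ := by
      by_contra h
      exact hF ⟨(x₁, x₂), Finset.mem_filter.mpr ⟨Finset.mem_univ _, h⟩⟩
    simp [hx]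


set_option maxHeartbeats 1000000 in
/-- Theorem 4, Deep SPI for representation learning: for every
coupling of the stationary distribution with itself, the probability that the
value difference exceeds `K_V·d̄(φ(s₁), φ(s₂)) + ε` is at most `δ`. -/
theorem representation_quality
    [Nonempty S] [Nonempty A] [Nonempty SL] [MetricSpace SL] [DecidableEq SL]
    (P : S → A → S → ℝ)
    (hP : ∀ s a, (∀ s', 0 ≤ P s a s') ∧ (∑ s', P s a s') = 1)
    (R : S → A → ℝ) (γ : ℝ) (hγ : 1 / 2 < γ ∧ γ < 1)
    (Pbar : SL → A → SL → ℝ)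
    (hPbar : ∀ x a, (∀ x', 0 ≤ Pbar x a x') ∧ (∑ x', Pbar x a x') = 1)
    (Rbar : SL → A → ℝ)
    (φ : S → SL)
    (πbar : SL → A → ℝ) (hπbar : IsPolicy πbar)
    (πb : S → A → ℝ) (hπb : IsPolicy πb)
    (C : ℝ) (hC : 1 < C ∧ C < 1 / γ)
    (hmem : InNbhd C πb (fun s a => πbar (φ s) a))
    (hne : ((Finset.univ : Finset (S × A)).filter (fun p => 0 < πb p.1 p.2)).Nonempty)
    (D : ℝ)
    (hD : D = ((Finset.univ : Finset (S × A)).filter (fun p => 0 < πb p.1 p.2)).sup' hne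
      (fun p => πbar (φ p.1) p.2 / πb p.1 p.2))
    (ξ : S → ℝ) (hξ : (∀ s, 0 ≤ ξ s) ∧ (∑ s, ξ s) = 1)
    (hstat : ∀ s', (∑ s, ∑ a, ξ s * πb s a * P s a s') = ξ s')
    (KR KP : ℝ) (hKR0 : 0 ≤ KR) (hKP0 : 0 ≤ KP) (hKP : KP < 1 / γ)
    (hLipR : ∀ x₁ x₂ : SL,
      |(∑ a, πbar x₁ a * Rbar x₁ a) - (∑ a, πbar x₂ a * Rbar x₂ a)| ≤ KR * dist x₁ x₂)
    (hLipP : ∀ x₁ x₂ : SL,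
      Wass (fun x' => ∑ a, πbar x₁ a * Pbar x₁ a x')
        (fun x' => ∑ a, πbar x₂ a * Pbar x₂ a x') ≤ KP * dist x₁ x₂)
    (KV : ℝ) (hKV : KV = KR / (1 - γ * KP))
    (V : S → ℝ)
    (hV : ∀ s, V s = ∑ a, πbar (φ s) a * (R s a + γ * ∑ s', P s a s' * V s'))
    (LR LP : ℝ)
    (hLR : LR = ∑ s, ∑ a, ξ s * πb s a * |R s a - Rbar (φ s) a|)
    (hLP : LP = ∑ s, ∑ a, ξ s * πb s a *
      Wass (fun x => ∑ s', if φ s' = x then P s a s' else 0) (Pbar (φ s) a))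
    (ε δ : ℝ) (hε : 0 < ε)
    (hδ : δ = 4 * (LR + γ * KV * LP) / (ε * (1 / D - γ))) :
    ∀ lam : S × S → ℝ, (∀ p, 0 ≤ lam p) →
      (∀ s, (∑ t, lam (s, t)) = ξ s) → (∀ t, (∑ s, lam (s, t)) = ξ t) →
      (∑ p ∈ (Finset.univ : Finset (S × S)).filter
        (fun p => KV * dist (φ p.1) (φ p.2) + ε < |V p.1 - V p.2|), lam p) ≤ δ := by
  classical
  intro lam hlam0 hm1 hm2
  have hγ0 : (0:ℝ) < γ := by linarith [hγ.1]
  have hγ1 : γ < 1 := hγ.2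
  have hγKP : γ * KP < 1 := by
    have := (lt_div_iff₀ hγ0).mp hKP
    linarith [this]
  have hdenKV : 0 < 1 - γ * KP := by linarith
  have hKV0 : 0 ≤ KV := hKV ▸ div_nonneg hKR0 hdenKV.le
  -- the latent value function
  obtain ⟨Vb, hVb⟩ := exists_latent_value πbar Rbar Pbar γ hγ0.le hγ1 hπbar hPbar
  have hVlip : ∀ x₁ x₂ : SL, |Vb x₁ - Vb x₂| ≤ KV * dist x₁ x₂ := by
    intro x₁ x₂
    rw [hKV]
    exact latent_value_lipschitz πbar Rbar Pbar γ KR KP hγ0.le hγKP hKR0 hKP0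
      hπbar hPbar hLipR hLipP Vb hVb x₁ x₂
  -- properties of D
  have hsupp := hmem.2.1
  have hrange := hmem.2.2
  have hπsupp : ∀ s a, πbar (φ s) a ≤ D * πb s a := by
    intro s a
    by_cases h : 0 < πb s a
    · have hDp : πbar (φ s) a / πb s a ≤ D := by
        rw [hD]
        exact Finset.le_sup' (fun p : S × A => πbar (φ p.1) p.2 / πb p.1 p.2)
          (Finset.mem_filter.mpr ⟨Finset.mem_univ (s, a), h⟩)
      calc πbar (φ s) a = (πbar (φ s) a / πb s a) * πb s a := by field_simp
        _ ≤ D * πb s a := mul_le_mul_of_nonneg_right hDp h.le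
    · have h0' : πb s a = 0 := le_antisymm (not_lt.mp h) ((hπb s).1 a)
      have hn : ¬ 0 < πbar (φ s) a := fun hc => h ((hsupp s a).mpr hc)
      have hπ0 : πbar (φ s) a = 0 := le_antisymm (not_lt.mp hn) ((hπbar (φ s)).1 a)
      rw [h0', hπ0, mul_zero]
  have hC0 : 0 < C := by linarith [hC.1]
  have hDC : D ≤ C := by
    rw [hD]
    apply Finset.sup'_le
    intro p hp
    exact (hrange p.1 p.2 (Finset.mem_filter.mp hp).2).2
  have hD0 : 0 < D := by
    obtain ⟨p, hp⟩ := hne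
    have hγ2 : 1 / γ < 2 := by
      rw [div_lt_iff₀ hγ0]; linarith [hγ.1]
    have h2C : 0 < 2 - C := by linarith [hC.2]
    have h1 := (hrange p.1 p.2 (Finset.mem_filter.mp hp).2).1
    have hle := Finset.le_sup' (fun p : S × A => πbar (φ p.1) p.2 / πb p.1 p.2) hp
    rw [hD]
    calc (0:ℝ) < 2 - C := h2C
      _ ≤ πbar (φ p.1) p.2 / πb p.1 p.2 := h1
      _ ≤ _ := hle
  have hγD : γ * D < 1 := by
    calc γ * D ≤ γ * C := mul_le_mul_of_nonneg_left hDC hγ0.le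
      _ < γ * (1/γ) := mul_lt_mul_of_pos_left hC.2 hγ0
      _ = 1 := by field_simp
  have h1D : 0 < 1 / D - γ := by
    rw [sub_pos, lt_div_iff₀ hD0]
    linarith [hγD]
  -- pushforward facts
  have hμ0 : ∀ (s : S) (a : A) (x : SL), 0 ≤ ∑ s', if φ s' = x then P s a s' else 0 := by
    intro s a x
    exact Finset.sum_nonneg fun s' _ => by
      split <;> [exact (hP s a).1 s'; exact le_refl 0]
  have hμ1 : ∀ (s : S) (a : A), (∑ x, ∑ s', if φ s' = x then P s a s' else 0) = 1 := by
    intro s a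
    rw [Finset.sum_comm]
    calc (∑ s', ∑ x, if φ s' = x then P s a s' else 0) = ∑ s', P s a s' := by
          refine Finset.sum_congr rfl fun s' _ => ?_
          simp [Finset.sum_ite_eq]
      _ = 1 := (hP s a).2
  have hpush : ∀ (s : S) (a : A),
      (∑ x, (∑ s', if φ s' = x then P s a s' else 0) * Vb x) = ∑ s', P s a s' * Vb (φ s') := by
    intro s a
    calc (∑ x, (∑ s', if φ s' = x then P s a s' else 0) * Vb x)
        = ∑ x, ∑ s', (if φ s' = x then P s a s' * Vb x else 0) := by
          refine Finset.sum_congr rfl fun x _ => ?_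
          rw [Finset.sum_mul]
          exact Finset.sum_congr rfl fun s' _ => by rw [ite_mul, zero_mul]
      _ = ∑ s', ∑ x, (if φ s' = x then P s a s' * Vb x else 0) := Finset.sum_comm
      _ = ∑ s', P s a s' * Vb (φ s') := by
          refine Finset.sum_congr rfl fun s' _ => ?_
          simp [Finset.sum_ite_eq]
  set W : S → A → ℝ := fun s a =>
    Wass (fun x => ∑ s', if φ s' = x then P s a s' else 0) (Pbar (φ s) a) with hWdef
  have hW0 : ∀ s a, 0 ≤ W s a := fun s a => wass_nonneg _ _
  have hterm3 : ∀ s a, |(∑ s', P s a s' * Vb (φ s')) - ∑ x', Pbar (φ s) a x' * Vb x'|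
      ≤ KV * W s a := by
    intro s a
    rw [← hpush s a]
    exact kantorovich KV hKV0 Vb hVlip _ _ (hμ0 s a) (hμ1 s a)
      (hPbar (φ s) a).1 (hPbar (φ s) a).2
  set g : S → ℝ := fun s => |V s - Vb (φ s)| with hgdef
  have hg0 : ∀ s, 0 ≤ g s := fun s => abs_nonneg _
  set X : S → A → ℝ := fun s a =>
    |R s a - Rbar (φ s) a| + γ * (∑ s', P s a s' * g s') + γ * (KV * W s a) with hXdef
  have hX0 : ∀ s a, 0 ≤ X s a := by
    intro s a
    have h1 : 0 ≤ ∑ s', P s a s' * g s' :=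
      Finset.sum_nonneg fun s' _ => mul_nonneg ((hP s a).1 s') (hg0 s')
    have := hW0 s a
    have := abs_nonneg (R s a - Rbar (φ s) a)
    positivity
  have hptwise : ∀ s, g s ≤ ∑ a, πbar (φ s) a * X s a := by
    intro s
    have e : V s - Vb (φ s) = ∑ a, πbar (φ s) a *
        ((R s a - Rbar (φ s) a) + γ * (∑ s', P s a s' * (V s' - Vb (φ s')))
          + γ * ((∑ s', P s a s' * Vb (φ s')) - ∑ x', Pbar (φ s) a x' * Vb x')) := by
      rw [hV s, hVb (φ s), ← Finset.sum_sub_distrib]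
      refine Finset.sum_congr rfl fun a _ => ?_
      rw [← mul_sub]
      congr 1
      have e2 : (∑ s', P s a s' * (V s' - Vb (φ s')))
          = (∑ s', P s a s' * V s') - ∑ s', P s a s' * Vb (φ s') := by
        rw [← Finset.sum_sub_distrib]
        exact Finset.sum_congr rfl fun s' _ => by ring
      rw [e2]; ring
    show |V s - Vb (φ s)| ≤ _
    rw [e]
    refine le_trans (Finset.abs_sum_le_sum_abs _ _) (Finset.sum_le_sum fun a _ => ?_)
    rw [abs_mul, abs_of_nonneg ((hπbar (φ s)).1 a)]
    refine mul_le_mul_of_nonneg_left ?_ ((hπbar (φ s)).1 a)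
    refine le_trans (abs_add_three _ _ _) ?_
    have h2 : |γ * (∑ s', P s a s' * (V s' - Vb (φ s')))| ≤ γ * ∑ s', P s a s' * g s' := by
      rw [abs_mul, abs_of_nonneg hγ0.le]
      refine mul_le_mul_of_nonneg_left ?_ hγ0.le
      refine le_trans (Finset.abs_sum_le_sum_abs _ _) (Finset.sum_le_sum fun s' _ => ?_)
      rw [abs_mul, abs_of_nonneg ((hP s a).1 s')]
    have h3 : |γ * ((∑ s', P s a s' * Vb (φ s')) - ∑ x', Pbar (φ s) a x' * Vb x')|
        ≤ γ * (KV * W s a) := by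
      rw [abs_mul, abs_of_nonneg hγ0.le]
      exact mul_le_mul_of_nonneg_left (hterm3 s a) hγ0.le
    exact add_le_add (add_le_add (le_refl _) h2) h3
  -- expectation bound
  set E : ℝ := ∑ s, ξ s * g s with hEdef
  have hE0 : 0 ≤ E := Finset.sum_nonneg fun s _ => mul_nonneg (hξ.1 s) (hg0 s)
  have step1 : E ≤ ∑ s, ∑ a, ξ s * (D * πb s a) * X s a := by
    calc E ≤ ∑ s, ξ s * (∑ a, πbar (φ s) a * X s a) :=
          Finset.sum_le_sum fun s _ => mul_le_mul_of_nonneg_left (hptwise s) (hξ.1 s)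
      _ = ∑ s, ∑ a, ξ s * (πbar (φ s) a * X s a) := by
          exact Finset.sum_congr rfl fun s _ => Finset.mul_sum _ _ _
      _ ≤ ∑ s, ∑ a, ξ s * (D * πb s a) * X s a := by
          refine Finset.sum_le_sum fun s _ => Finset.sum_le_sum fun a _ => ?_
          rw [← mul_assoc]
          exact mul_le_mul_of_nonneg_right
            (mul_le_mul_of_nonneg_left (hπsupp s a) (hξ.1 s)) (hX0 s a)
  set Emid : ℝ := ∑ s, ∑ a, (ξ s * πb s a) * ∑ s', P s a s' * g s' with hEmiddef
  have split : (∑ s, ∑ a, ξ s * (D * πb s a) * X s a)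
      = D * LR + γ * D * Emid + γ * KV * D * LP := by
    have e : ∀ (s : S) (a : A), ξ s * (D * πb s a) * X s a =
        D * (ξ s * πb s a * |R s a - Rbar (φ s) a|)
        + γ * D * ((ξ s * πb s a) * ∑ s', P s a s' * g s')
        + γ * KV * D * (ξ s * πb s a * W s a) := by
      intro s a
      rw [hXdef]
      ring
    simp only [e, Finset.sum_add_distrib, ← Finset.mul_sum]
    rw [hLR, hLP, hEmiddef]
  have hEmid : Emid = E := by
    have e1 : ∀ (s : S) (a : A), (ξ s * πb s a) * (∑ s', P s a s' * g s')
        = ∑ s', ξ s * πb s a * P s a s' * g s' := by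
      intro s a
      rw [Finset.mul_sum]
      exact Finset.sum_congr rfl fun s' _ => by ring
    rw [hEmiddef, hEdef]
    calc (∑ s, ∑ a, (ξ s * πb s a) * ∑ s', P s a s' * g s')
        = ∑ s, ∑ a, ∑ s', ξ s * πb s a * P s a s' * g s' := by
          exact Finset.sum_congr rfl fun s _ => Finset.sum_congr rfl fun a _ => e1 s a
      _ = ∑ s, ∑ s', ∑ a, ξ s * πb s a * P s a s' * g s' :=
          Finset.sum_congr rfl fun s _ => Finset.sum_comm
      _ = ∑ s', ∑ s, ∑ a, ξ s * πb s a * P s a s' * g s' := Finset.sum_comm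
      _ = ∑ s', (∑ s, ∑ a, ξ s * πb s a * P s a s') * g s' := by
          refine Finset.sum_congr rfl fun s' _ => ?_
          rw [Finset.sum_mul]
          exact Finset.sum_congr rfl fun s _ => by rw [Finset.sum_mul]
      _ = ∑ s', ξ s' * g s' := Finset.sum_congr rfl fun s' _ => by rw [hstat s']
  have hLR0 : 0 ≤ LR := by
    rw [hLR]
    exact Finset.sum_nonneg fun s _ => Finset.sum_nonneg fun a _ =>
      mul_nonneg (mul_nonneg (hξ.1 s) ((hπb s).1 a)) (abs_nonneg _)
  have hLP0 : 0 ≤ LP := by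
    rw [hLP]
    exact Finset.sum_nonneg fun s _ => Finset.sum_nonneg fun a _ =>
      mul_nonneg (mul_nonneg (hξ.1 s) ((hπb s).1 a)) (wass_nonneg _ _)
  have hB0 : 0 ≤ LR + γ * KV * LP := by positivity
  have hEb : E * (1 - γ * D) ≤ D * (LR + γ * KV * LP) := by
    have := step1
    rw [split, hEmid] at this
    nlinarith [this]
  -- Markov-type argument
  set T := (Finset.univ : Finset (S × S)).filter
    (fun p => KV * dist (φ p.1) (φ p.2) + ε < |V p.1 - V p.2|) with hTdef
  have hTg : ∀ p ∈ T, ε < g p.1 + g p.2 := by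
    intro p hp
    have hp' := (Finset.mem_filter.mp hp).2
    have e : V p.1 - V p.2 = (V p.1 - Vb (φ p.1)) + (Vb (φ p.1) - Vb (φ p.2))
        + (Vb (φ p.2) - V p.2) := by ring
    have h1 : |V p.1 - V p.2| ≤ g p.1 + KV * dist (φ p.1) (φ p.2) + g p.2 := by
      rw [e]
      refine le_trans (abs_add_three _ _ _) ?_
      have : |Vb (φ p.2) - V p.2| = g p.2 := by rw [hgdef]; exact abs_sub_comm _ _
      rw [this]
      exact add_le_add (add_le_add (le_refl _) (hVlip _ _)) (le_refl _)
    linarith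
  have hkey : E * (1 / D - γ) ≤ LR + γ * KV * LP := by
    rw [← mul_le_mul_iff_of_pos_right hD0]
    have e : E * (1 / D - γ) * D = E * (1 - γ * D) := by
      rw [mul_assoc, sub_mul, one_div_mul_cancel hD0.ne']
    rw [e]
    nlinarith [hEb]
  calc (∑ p ∈ T, lam p) ≤ ∑ p ∈ T, lam p * ((g p.1 + g p.2) / ε) := by
        refine Finset.sum_le_sum fun p hp => ?_
        have h1 : 1 ≤ (g p.1 + g p.2) / ε := (one_le_div hε).mpr (le_of_lt (hTg p hp))
        calc lam p = lam p * 1 := (mul_one _).symm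
          _ ≤ lam p * ((g p.1 + g p.2) / ε) := mul_le_mul_of_nonneg_left h1 (hlam0 p)
    _ ≤ ∑ p : S × S, lam p * ((g p.1 + g p.2) / ε) := by
        refine Finset.sum_le_sum_of_subset_of_nonneg (Finset.filter_subset _ _) ?_
        intro p _ _
        exact mul_nonneg (hlam0 p)
          (div_nonneg (add_nonneg (hg0 p.1) (hg0 p.2)) hε.le)
    _ = (∑ p : S × S, lam p * (g p.1 + g p.2)) / ε := by
        rw [Finset.sum_div]
        exact Finset.sum_congr rfl fun p _ => (mul_div_assoc _ _ _).symm
    _ = (2 * E) / ε := by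
        congr 1
        have e1 : (∑ p : S × S, lam p * (g p.1 + g p.2))
            = (∑ p : S × S, lam p * g p.1) + ∑ p : S × S, lam p * g p.2 := by
          rw [← Finset.sum_add_distrib]
          exact Finset.sum_congr rfl fun p _ => by ring
        have e2 : (∑ p : S × S, lam p * g p.1) = E := by
          rw [hEdef, Fintype.sum_prod_type]
          refine Finset.sum_congr rfl fun s _ => ?_
          rw [← hm1 s, Finset.sum_mul]
        have e3 : (∑ p : S × S, lam p * g p.2) = E := by
          rw [hEdef, Fintype.sum_prod_type_right]
          refine Finset.sum_congr rfl fun t _ => ?_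
          rw [← hm2 t, Finset.sum_mul]
        rw [e1, e2, e3]; ring
    _ ≤ δ := by
        rw [hδ, div_le_div_iff₀ hε (by positivity)]
        nlinarith [mul_le_mul_of_nonneg_right hkey hε.le, mul_nonneg hB0 hε.le]
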